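/- (Corollary 3(b)) Under the mirror descent setup with β = 2 (symmetric finite differences), γ = 0, a_n = a·n^{−1/2}, and δ_n = d·n^{−1} with a, d > 0, for every n ≥ 1: E[J(θ̂_n) − J(θ*)] ≤ (C₁ + 2C₂ + 2C₃)·max(a, a^{−1})/√n + (9/7)·C₄ d⁴ a/n + 2·C₅ d²/n, where C₁ = r²/2, C₂ = c/(2κ), C₃ = K₂² r²/(2κ²), C₄ = b²/κ, C₅ = b r/√(2κ); in particular no log n factor appears. -/

import Mathlib

open MeasureTheory Filter Topology

lemma md_dirDeriv_le {f : ℝ → ℝ} {f' x d C : ℝ} (hf : HasDerivAt f f' x)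
    (h : ∀ t ∈ Set.Ioc (0:ℝ) 1, (f (x + t * d) - f x) / t ≤ C) : f' * d ≤ C := by
  have hg : HasDerivAt (fun t : ℝ => f (x + t * d)) (f' * d) 0 := by
    have h1 : HasDerivAt (fun t : ℝ => x + t * d) d 0 := by
      simpa using ((hasDerivAt_id (0:ℝ)).mul_const d).const_add x
    exact (by simpa using hf : HasDerivAt f f' (x + 0 * d)).comp 0 h1
  have hslope : Tendsto (slope (fun t : ℝ => f (x + t * d)) 0) (𝓝[>] 0) (𝓝 (f' * d)) :=
    (hasDerivAt_iff_tendsto_slope.1 hg).mono_left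
      (nhdsWithin_mono _ (fun t ht => ne_of_gt ht))
  refine le_of_tendsto hslope ?_
  filter_upwards [Ioc_mem_nhdsGT_of_mem (by simp : (0:ℝ) ∈ Set.Ico (0:ℝ) 1)] with t ht
  have := h t ht
  simpa [slope_def_field, div_eq_iff (ne_of_gt ht.1)] using by
    simpa [slope, ht.1.ne', sub_zero] using this

/-- One-step mirror descent inequality (deterministic, pointwise). -/
lemma md_step {Θ : Set ℝ} (hΘcv : Convex ℝ Θ)
    {ψ ψ' : ℝ → ℝ} (hψ : ∀ x, HasDerivAt ψ (ψ' x) x)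
    {J J' : ℝ → ℝ} (hJconv : ConvexOn ℝ Set.univ J) (hJ : ∀ x, HasDerivAt J (J' x) x)
    {θstar : ℝ} (hθstar : θstar ∈ Θ)
    {κ : ℝ} (hκ : 0 < κ)
    (hD_lower : ∀ x ∈ Θ, ∀ y ∈ Θ, κ * (x - y) ^ 2 ≤ ψ x - ψ y - ψ' y * (x - y))
    {an hn x xp : ℝ} (hx : x ∈ Θ) (hxp : xp ∈ Θ) (han : 0 < an)
    (hmin : IsMinOn (fun z : ℝ => hn * z + (ψ z - ψ x - ψ' x * (z - x)) / an) Θ xp) :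
    J x - J θstar ≤
      ((ψ θstar - ψ x - ψ' x * (θstar - x)) - (ψ θstar - ψ xp - ψ' xp * (θstar - xp))) / an
      + an * hn ^ 2 / (4 * κ) + (J' x - hn) * (x - θstar) := by
  set F : ℝ → ℝ := fun z => hn * z + (ψ z - ψ x - ψ' x * (z - x)) / an with hF
  have hF' : HasDerivAt F (hn + (ψ' xp - ψ' x) / an) xp := by
    have h1 : HasDerivAt (fun z : ℝ => hn * z) hn xp := by
      simpa using (hasDerivAt_id xp).const_mul hn
    have h2 : HasDerivAt (fun z : ℝ => (ψ z - ψ x - ψ' x * (z - x)) / an)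
        ((ψ' xp - ψ' x) / an) xp := by
      have h3 : HasDerivAt (fun z : ℝ => ψ z - ψ x - ψ' x * (z - x)) (ψ' xp - ψ' x) xp := by
        have h4 : HasDerivAt (fun z : ℝ => ψ' x * (z - x)) (ψ' x) xp := by
          simpa using ((hasDerivAt_id xp).sub_const x).const_mul (ψ' x)
        exact ((hψ xp).sub_const (ψ x)).sub h4
      simpa [div_eq_mul_inv] using h3.mul_const (an⁻¹)
    exact h1.add h2
  -- first-order optimality: 0 ≤ F'(xp) * (θstar - xp)
  have hopt : 0 ≤ (hn + (ψ' xp - ψ' x) / an) * (θstar - xp) := by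
    have := md_dirDeriv_le (f := fun z => -(F z)) (hf := hF'.neg)
      (d := θstar - xp) (C := 0) ?_
    · nlinarith [this]
    · intro t ht
      have hmem : xp + t * (θstar - xp) ∈ Θ := by
        have hh := hΘcv hxp hθstar (by linarith [ht.2] : (0:ℝ) ≤ 1 - t) ht.1.le (by ring)
        convert hh using 1
        simp only [smul_eq_mul]; ring
      have hge : F xp ≤ F (xp + t * (θstar - xp)) := hmin hmem
      have ht0 : (0:ℝ) < t := ht.1
      apply div_nonpos_of_nonpos_of_nonneg _ ht0.le
      simp only [neg_sub_neg]
      linarith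
  -- convexity tangent-line bound
  have hconv : J' x * (θstar - x) ≤ J θstar - J x := by
    refine md_dirDeriv_le (hJ x) ?_
    intro t ht
    have := hJconv.2 (Set.mem_univ x) (Set.mem_univ θstar)
      (by linarith [ht.2] : (0:ℝ) ≤ 1 - t) ht.1.le (by ring)
    have heq : (1 - t) • x + t • θstar = x + t * (θstar - x) := by
      simp [smul_eq_mul]; ring
    rw [heq] at this
    rw [div_le_iff₀ ht.1]
    simp only [smul_eq_mul] at this
    nlinarith [this]
  -- Bregman strong convexity at (xp, x)
  have hbreg := hD_lower xp hxp x hx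
  -- combine
  have e1 : an * ((hn + (ψ' xp - ψ' x) / an) * (θstar - xp)) =
      an * hn * (θstar - xp) + (ψ' xp - ψ' x) * (θstar - xp) := by
    field_simp
  have h2' : 0 ≤ an * hn * (θstar - xp) + (ψ' xp - ψ' x) * (θstar - xp) := by
    rw [← e1]; exact mul_nonneg han.le hopt
  have hid : (ψ' xp - ψ' x) * (θstar - xp) =
      (ψ θstar - ψ x - ψ' x * (θstar - x)) - (ψ θstar - ψ xp - ψ' xp * (θstar - xp))
      - (ψ xp - ψ x - ψ' x * (xp - x)) := by ring
  have h4 : an * hn * (x - xp) ≤ (ψ xp - ψ x - ψ' x * (xp - x)) + an ^ 2 * hn ^ 2 / (4 * κ) := by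
    have h5 : an * hn * (x - xp) - (ψ xp - ψ x - ψ' x * (xp - x)) ≤ an ^ 2 * hn ^ 2 / (4 * κ) := by
      rw [le_div_iff₀ (by positivity : (0:ℝ) < 4 * κ)]
      nlinarith [sq_nonneg (2 * κ * (x - xp) - an * hn)]
    linarith
  -- total
  rw [← mul_le_mul_iff_right₀ han]
  have hrhs : an * (((ψ θstar - ψ x - ψ' x * (θstar - x))
        - (ψ θstar - ψ xp - ψ' xp * (θstar - xp))) / an
      + an * hn ^ 2 / (4 * κ) + (J' x - hn) * (x - θstar)) =
      ((ψ θstar - ψ x - ψ' x * (θstar - x)) - (ψ θstar - ψ xp - ψ' xp * (θstar - xp)))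
      + an ^ 2 * hn ^ 2 / (4 * κ) + an * ((J' x - hn) * (x - θstar)) := by
    field_simp
  rw [hrhs]
  have hconv' : an * (J x - J θstar) ≤ an * (J' x * (x - θstar)) := by
    have : J x - J θstar ≤ J' x * (x - θstar) := by nlinarith [hconv]
    exact mul_le_mul_of_nonneg_left this han.le
  nlinarith [h2', h4, hid, hconv']

lemma md_sum_inv_sq : ∀ n : ℕ, 1 ≤ n →
    ∑ i ∈ Finset.Icc 1 n, ((i:ℝ)^2)⁻¹ ≤ 2 - (n:ℝ)⁻¹ := by
  intro n hn
  induction n, hn using Nat.le_induction with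
  | base => norm_num
  | succ n hn ih =>
    rw [Finset.sum_Icc_succ_top (by omega)]
    have h1 : (0:ℝ) < n := by exact_mod_cast hn
    have h2 : (0:ℝ) < (n:ℝ) + 1 := by linarith
    have key : (((n:ℝ)+1)^2)⁻¹ ≤ (n:ℝ)⁻¹ - ((n:ℝ)+1)⁻¹ := by
      rw [← one_div, ← one_div, ← one_div, div_sub_div _ _ (ne_of_gt h1) (ne_of_gt h2),
        div_le_div_iff₀ (by positivity) (by positivity)]
      nlinarith
    push_cast
    linarith [ih]

lemma md_sum_inv_sqrt : ∀ n : ℕ, 1 ≤ n →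
    ∑ i ∈ Finset.Icc 1 n, ((i:ℝ)) ^ (-(1:ℝ)/2) ≤ 2 * Real.sqrt n := by
  intro n hn
  induction n, hn using Nat.le_induction with
  | base =>
    simp only [Finset.Icc_self, Finset.sum_singleton, Nat.cast_one, Real.one_rpow]
    rw [Real.sqrt_one]; norm_num
  | succ n hn ih =>
    rw [Finset.sum_Icc_succ_top (by omega)]
    have h1 : (0:ℝ) < n := by exact_mod_cast hn
    have h2 : (0:ℝ) < (n:ℝ) + 1 := by linarith
    have hs := Real.sq_sqrt h1.le
    have ht := Real.sq_sqrt h2.le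
    have hs0 := Real.sqrt_nonneg (n:ℝ)
    have ht0 : 0 < Real.sqrt ((n:ℝ)+1) := Real.sqrt_pos.2 h2
    have hrw : ((n:ℝ)+1) ^ (-(1:ℝ)/2) = (Real.sqrt ((n:ℝ)+1))⁻¹ := by
      rw [Real.sqrt_eq_rpow, ← Real.rpow_neg h2.le]
      norm_num
    have key : (Real.sqrt ((n:ℝ)+1))⁻¹ ≤ 2 * Real.sqrt ((n:ℝ)+1) - 2 * Real.sqrt n := by
      rw [inv_le_iff_one_le_mul₀' ht0]
      nlinarith [sq_nonneg (Real.sqrt n - Real.sqrt ((n:ℝ)+1))]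
    push_cast
    push_cast at ih
    rw [hrw]
    linarith

lemma md_abel {a e : ℕ → ℝ} {B : ℝ}
    (hpos : ∀ i, 1 ≤ i → 0 < a i) (hmono : ∀ i, 1 ≤ i → a (i+1) ≤ a i)
    (he0 : ∀ i, 1 ≤ i → 0 ≤ e i) (heB : ∀ i, 1 ≤ i → e i ≤ B) :
    ∀ n : ℕ, 1 ≤ n → ∑ i ∈ Finset.Icc 1 n, (e i - e (i+1)) / a i ≤ B / a n - e (n+1) / a n := by
  intro n hn
  induction n, hn using Nat.le_induction with
  | base =>
    simp only [Finset.Icc_self, Finset.sum_singleton]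
    have h1 := hpos 1 le_rfl
    have h2 := heB 1 le_rfl
    rw [div_sub_div_same, div_le_div_iff₀ h1 h1]
    nlinarith
  | succ n hn ih =>
    rw [Finset.sum_Icc_succ_top (by omega)]
    have hp1 := hpos n hn
    have hp2 := hpos (n+1) (by omega)
    have hm := hmono n hn
    have hB := heB (n+1) (by omega)
    have h0 := he0 (n+1) (by omega)
    have hinv : (a n)⁻¹ ≤ (a (n+1))⁻¹ := inv_anti₀ hp2 hm
    have hfac : 0 ≤ (B - e (n+1)) * ((a (n+1))⁻¹ - (a n)⁻¹) :=
      mul_nonneg (by linarith) (by linarith)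
    have key : (e (n+1) - e (n+2)) / a (n+1) ≤
        (B / a (n+1) - e (n+2) / a (n+1)) - (B / a n - e (n+1) / a n) := by
      rw [div_sub_div_same, div_sub_div_same, div_eq_mul_inv, div_eq_mul_inv, div_eq_mul_inv]
      nlinarith
    have : n + 1 + 1 = n + 2 := rfl
    rw [this]
    linarith
lemma md_integrable_mul_of_ae_bound {Ω : Type*} {m0 : MeasurableSpace Ω} {μ : Measure Ω}
    {f g : Ω → ℝ} (hf : Integrable f μ) (hg : AEStronglyMeasurable g μ)
    {C : ℝ} (hbd : ∀ᵐ x ∂μ, |g x| ≤ C) : Integrable (fun x => g x * f x) μ := by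
  refine Integrable.mono' (hf.norm.const_mul C) (hg.mul hf.1) ?_
  filter_upwards [hbd] with x hx
  have h0 : (0:ℝ) ≤ |g x| := abs_nonneg _
  calc ‖g x * f x‖ = |g x| * ‖f x‖ := by rw [norm_mul]; rfl
    _ ≤ C * ‖f x‖ := by nlinarith [norm_nonneg (f x)]

lemma md_rpow_half {x : ℝ} (hx : 0 ≤ x) : x ^ (-(1:ℝ)/2) = (Real.sqrt x)⁻¹ := by
  rw [Real.sqrt_eq_rpow, ← Real.rpow_neg hx]; norm_num
set_option maxHeartbeats 1000000 in
/-- Corollary 3(b): mirror descent with symmetric finite differences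
(`β = 2`), bounded conditional variance (`γ = 0`), stepsizes
`a_n = a n^{−1/2}` and widths `δ_n = d n^{−1}`; no `log n` factor appears. -/
theorem md_corollary3b
    {Ω : Type*} {m0 : MeasurableSpace Ω} {μ : Measure Ω} [IsProbabilityMeasure μ]
    (ℱ : ℕ → MeasurableSpace Ω) (hℱ_le : ∀ n, ℱ n ≤ m0) (hℱ_mono : Monotone ℱ)
    (Θ : Set ℝ) (hΘne : Θ.Nonempty) (hΘcp : IsCompact Θ) (hΘcv : Convex ℝ Θ)
    (J J' : ℝ → ℝ) (hJconv : ConvexOn ℝ Set.univ J)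
    (hJ : ∀ x, HasDerivAt J (J' x) x)
    (θstar : ℝ) (hθstar : θstar ∈ Θ) (hmin : ∀ x ∈ Θ, J θstar ≤ J x)
    (ψ ψ' : ℝ → ℝ) (hψ : ∀ x, HasDerivAt ψ (ψ' x) x)
    (κ r : ℝ) (hκ : 0 < κ) (hr : 0 < r)
    (hD_lower : ∀ x ∈ Θ, ∀ y ∈ Θ,
      κ * (x - y) ^ 2 ≤ ψ x - ψ y - ψ' y * (x - y))
    (hD_upper : ∀ x ∈ Θ, ψ θstar - ψ x - ψ' x * (θstar - x) ≤ r ^ 2 / 2)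
    (K₁ K₂ : ℝ) (hK₁ : 0 < K₁) (hK₁₂ : K₁ ≤ K₂)
    (hJ'bound : ∀ x ∈ Θ, K₁ * |x - θstar| ≤ |J' x| ∧ |J' x| ≤ K₂ * |x - θstar|)
    (a₀ d₀ : ℝ) (ha₀ : 0 < a₀) (hd₀ : 0 < d₀)
    (a δ : ℕ → ℝ)
    (ha : ∀ n : ℕ, a n = a₀ * (n : ℝ) ^ (-(1 : ℝ) / 2))
    (hδ : ∀ n : ℕ, δ n = d₀ * (n : ℝ)⁻¹)
    (b c : ℝ) (hb : 0 ≤ b) (hc : 0 ≤ c)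
    (θ h Δ : ℕ → Ω → ℝ)
    (hθmeas : ∀ n, StronglyMeasurable[ℱ n] (θ n))
    (hhL2 : ∀ n, MemLp (h n) 2 μ)
    (hθΘ : ∀ n, ∀ᵐ ω ∂μ, θ n ω ∈ Θ)
    (hupdate : ∀ n : ℕ, 1 ≤ n → ∀ᵐ ω ∂μ,
      IsMinOn (fun x : ℝ => h n ω * x +
        (ψ x - ψ (θ n ω) - ψ' (θ n ω) * (x - θ n ω)) / a n) Θ (θ (n + 1) ω))
    (hbias : ∀ n : ℕ, 1 ≤ n →
      μ[h n | ℱ n] =ᵐ[μ] fun ω => J' (θ n ω) + Δ n ω)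
    (hΔ : ∀ n : ℕ, 1 ≤ n → ∀ᵐ ω ∂μ, |Δ n ω| ≤ b * δ n ^ 2)
    (hvar : ∀ n : ℕ, 1 ≤ n → ∀ᵐ ω ∂μ,
      (μ[fun ω' => (h n ω' - (μ[h n | ℱ n]) ω') ^ 2 | ℱ n]) ω ≤ c) :
    ∀ n : ℕ, 1 ≤ n →
      ∫ ω, (J ((∑ i ∈ Finset.Icc 1 n, θ i ω) / n) - J θstar) ∂μ ≤
        (r ^ 2 / 2 + 2 * (c / (2 * κ)) + 2 * (K₂ ^ 2 * r ^ 2 / (2 * κ ^ 2)))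
            * max a₀ a₀⁻¹ / Real.sqrt n
        + (9 / 7) * (b ^ 2 / κ) * d₀ ^ 4 * a₀ / n
        + 2 * (b * r / Real.sqrt (2 * κ)) * d₀ ^ 2 / n := by
  intro n hn
  have hK₂ : 0 < K₂ := lt_of_lt_of_le hK₁ hK₁₂
  set R : ℝ := r / Real.sqrt (2 * κ) with hR_def
  have h2κ : (0:ℝ) < 2 * κ := by linarith
  have hs2κ : 0 < Real.sqrt (2 * κ) := Real.sqrt_pos.2 h2κ
  have hR : 0 < R := div_pos hr hs2κ
  have hR2 : R ^ 2 = r ^ 2 / (2 * κ) := by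
    rw [hR_def, div_pow, Real.sq_sqrt h2κ.le]
  -- measurability
  have hθm : ∀ i, Measurable (θ i) := fun i => ((hθmeas i).mono (hℱ_le i)).measurable
  have hψ'm : Measurable ψ' := by
    have hh : ψ' = deriv ψ := funext fun x => ((hψ x).deriv).symm
    rw [hh]; exact measurable_deriv ψ
  have hJ'm : Measurable J' := by
    have hh : J' = deriv J := funext fun x => ((hJ x).deriv).symm
    rw [hh]; exact measurable_deriv J
  have hdψ : Differentiable ℝ ψ := fun x => (hψ x).differentiableAt
  have hdJ : Differentiable ℝ J := fun x => (hJ x).differentiableAt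
  have hψc : Continuous ψ := hdψ.continuous
  have hJc : Continuous J := hdJ.continuous
  -- a.s. bounds on the iterates
  have hθbd : ∀ i, ∀ᵐ ω ∂μ, |θ i ω - θstar| ≤ R ∧ (θ i ω - θstar) ^ 2 ≤ R ^ 2 := by
    intro i
    filter_upwards [hθΘ i] with ω hω
    have h1 := hD_lower θstar hθstar (θ i ω) hω
    have h2 := hD_upper (θ i ω) hω
    have hsq : (θ i ω - θstar) ^ 2 ≤ R ^ 2 := by
      rw [hR2, le_div_iff₀ h2κ]; nlinarith
    refine ⟨?_, hsq⟩
    have h3 := Real.sqrt_le_sqrt hsq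
    rwa [Real.sqrt_sq_eq_abs, Real.sqrt_sq hR.le] at h3
  have hJ'bd : ∀ i, ∀ᵐ ω ∂μ, |J' (θ i ω)| ≤ K₂ * R := by
    intro i
    filter_upwards [hθΘ i, hθbd i] with ω hω hbd
    exact (hJ'bound _ hω).2.trans (mul_le_mul_of_nonneg_left hbd.1 hK₂.le)
  -- integrability of continuous functions of the iterates
  have hGint : ∀ (G : ℝ → ℝ), Continuous G → ∀ i, Integrable (fun ω => G (θ i ω)) μ := by
    intro G hG i
    obtain ⟨C, hC⟩ := hΘcp.exists_bound_of_continuousOn hG.continuousOn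
    refine (integrable_const C).mono' (hG.measurable.comp (hθm i)).aestronglyMeasurable ?_
    filter_upwards [hθΘ i] with ω hω using hC _ hω
  -- Bregman distance to θstar
  set Dst : ℕ → Ω → ℝ :=
    fun i ω => ψ θstar - ψ (θ i ω) - ψ' (θ i ω) * (θstar - θ i ω) with hDst
  have hDstm : ∀ i, AEStronglyMeasurable (Dst i) μ := by
    intro i
    refine Measurable.aestronglyMeasurable ?_
    exact (measurable_const.sub (hψc.measurable.comp (hθm i))).sub
      ((hψ'm.comp (hθm i)).mul (measurable_const.sub (hθm i)))
  have hDstbd : ∀ i, ∀ᵐ ω ∂μ, 0 ≤ Dst i ω ∧ Dst i ω ≤ r ^ 2 / 2 := by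
    intro i; filter_upwards [hθΘ i] with ω hω
    have h1 := hD_lower θstar hθstar (θ i ω) hω
    have h2 := hD_upper (θ i ω) hω
    exact ⟨le_trans (by positivity) h1, h2⟩
  have hDstint : ∀ i, Integrable (Dst i) μ := by
    intro i
    refine (integrable_const (r ^ 2 / 2)).mono' (hDstm i) ?_
    filter_upwards [hDstbd i] with ω hω
    rw [Real.norm_eq_abs, abs_le]
    have hr2 : (0:ℝ) ≤ r ^ 2 / 2 := by positivity
    simp only [hDst] at hω ⊢
    exact ⟨by linarith [hω.1], hω.2⟩
  set e : ℕ → ℝ := fun i => ∫ ω, Dst i ω ∂μ with he_def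
  have he0 : ∀ i, 0 ≤ e i := fun i =>
    integral_nonneg_of_ae ((hDstbd i).mono fun ω hω => hω.1)
  have heB : ∀ i, e i ≤ r ^ 2 / 2 := by
    intro i
    calc e i ≤ ∫ _ω, (r ^ 2 / 2 : ℝ) ∂μ :=
          integral_mono_ae (hDstint i) (integrable_const _)
            ((hDstbd i).mono fun ω hω => hω.2)
      _ = r ^ 2 / 2 := by simp
  -- step sizes
  have hapos : ∀ i : ℕ, 1 ≤ i → 0 < a i := by
    intro i hi; rw [ha i]
    have h0 : (0:ℝ) < (i:ℝ) := by exact_mod_cast hi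
    positivity
  have hamono : ∀ i : ℕ, 1 ≤ i → a (i + 1) ≤ a i := by
    intro i hi
    have h0 : (0:ℝ) ≤ (i:ℝ) := by positivity
    have h1 : (0:ℝ) < (i:ℝ) := by exact_mod_cast hi
    rw [ha i, ha (i + 1), md_rpow_half h0, md_rpow_half (by push_cast; linarith)]
    have hs : 0 < Real.sqrt (i:ℝ) := Real.sqrt_pos.2 h1
    have hmono : Real.sqrt (i:ℝ) ≤ Real.sqrt ((i:ℝ) + 1) := Real.sqrt_le_sqrt (by linarith)
    push_cast
    exact mul_le_mul_of_nonneg_left (inv_anti₀ hs hmono) ha₀.le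
  -- integrability of J ∘ θ i
  have hJint : ∀ i, Integrable (fun ω => J (θ i ω) - J θstar) μ :=
    fun i => (hGint J hJc i).sub (integrable_const _)
  -- main per-step estimate in expectation
  have E1 : ∀ i : ℕ, 1 ≤ i →
      ∫ ω, (J (θ i ω) - J θstar) ∂μ ≤
        (e i - e (i + 1)) / a i
        + a i * (c + 2 * K₂ ^ 2 * R ^ 2 + 2 * b ^ 2 * (δ i) ^ 4) / (4 * κ)
        + b * (δ i) ^ 2 * R := by
    intro i hi
    set Mi : Ω → ℝ := μ[h i | ℱ i] with hMi_def
    have hMibd : ∀ᵐ ω ∂μ, |Mi ω| ≤ K₂ * R + b * (δ i) ^ 2 := by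
      filter_upwards [hbias i hi, hΔ i hi, hJ'bd i] with ω h1 h2 h3
      rw [hMi_def, h1]
      exact (abs_add_le _ _).trans (add_le_add h3 h2)
    have hgm : StronglyMeasurable[ℱ i] (fun ω => θ i ω - θstar) :=
      (hθmeas i).sub stronglyMeasurable_const
    have hgbd : ∀ᵐ ω ∂μ, |θ i ω - θstar| ≤ R := (hθbd i).mono fun ω hω => hω.1
    have hgm0 : AEStronglyMeasurable (fun ω => θ i ω - θstar) μ :=
      ((hgm.mono (hℱ_le i))).aestronglyMeasurable
    have hhint : Integrable (h i) μ := (hhL2 i).integrable one_le_two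
    have hMiint : Integrable Mi μ := integrable_condExp
    have hMim : AEStronglyMeasurable Mi μ :=
      (stronglyMeasurable_condExp.mono (hℱ_le i)).aestronglyMeasurable
    have hgh_int : Integrable (fun ω => (θ i ω - θstar) * h i ω) μ :=
      md_integrable_mul_of_ae_bound hhint hgm0 hgbd
    have pull : μ[(fun ω => θ i ω - θstar) * h i | ℱ i]
        =ᵐ[μ] (fun ω => θ i ω - θstar) * Mi :=
      condExp_mul_of_stronglyMeasurable_left hgm hgh_int hhint
    have hInt1 : ∫ ω, (θ i ω - θstar) * h i ω ∂μ = ∫ ω, (θ i ω - θstar) * Mi ω ∂μ := by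
      calc ∫ ω, (θ i ω - θstar) * h i ω ∂μ
          = ∫ ω, (μ[(fun ω => θ i ω - θstar) * h i | ℱ i]) ω ∂μ :=
            (integral_condExp (hℱ_le i)).symm
        _ = ∫ ω, ((fun ω => θ i ω - θstar) * Mi) ω ∂μ := integral_congr_ae pull
        _ = _ := rfl
    have hJθint : Integrable (fun ω => J' (θ i ω)) μ := by
      refine (integrable_const (K₂ * R)).mono'
        ((hJ'm.comp (hθm i)).aestronglyMeasurable) ?_
      filter_upwards [hJ'bd i] with ω hω using by rwa [Real.norm_eq_abs]
    have hJg_int : Integrable (fun ω => (θ i ω - θstar) * J' (θ i ω)) μ := by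
      have := md_integrable_mul_of_ae_bound hJθint hgm0 hgbd
      simpa [mul_comm] using this
    have hMg_int : Integrable (fun ω => (θ i ω - θstar) * Mi ω) μ :=
      md_integrable_mul_of_ae_bound hMiint hgm0 hgbd
    have hthird : ∫ ω, (J' (θ i ω) - h i ω) * (θ i ω - θstar) ∂μ ≤ b * (δ i) ^ 2 * R := by
      have heq : ∫ ω, (J' (θ i ω) - h i ω) * (θ i ω - θstar) ∂μ
          = ∫ ω, ((θ i ω - θstar) * J' (θ i ω) - (θ i ω - θstar) * Mi ω) ∂μ := by
        rw [integral_sub hJg_int hMg_int, ← hInt1, ← integral_sub hJg_int hgh_int]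
        apply integral_congr_ae
        filter_upwards with ω
        ring
      rw [heq]
      have hbound : ∀ᵐ ω ∂μ, (θ i ω - θstar) * J' (θ i ω) - (θ i ω - θstar) * Mi ω
          ≤ b * (δ i) ^ 2 * R := by
        filter_upwards [hbias i hi, hΔ i hi, hgbd] with ω h1 h2 h3
        have h4 : (θ i ω - θstar) * J' (θ i ω) - (θ i ω - θstar) * Mi ω
            = -((θ i ω - θstar) * Δ i ω) := by rw [hMi_def, h1]; ring
        rw [h4]
        calc -((θ i ω - θstar) * Δ i ω) ≤ |(θ i ω - θstar) * Δ i ω| := neg_le_abs _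
          _ = |θ i ω - θstar| * |Δ i ω| := abs_mul _ _
          _ ≤ R * (b * (δ i) ^ 2) := mul_le_mul h3 h2 (abs_nonneg _) hR.le
          _ = b * (δ i) ^ 2 * R := by ring
      calc ∫ ω, ((θ i ω - θstar) * J' (θ i ω) - (θ i ω - θstar) * Mi ω) ∂μ
          ≤ ∫ _ω, (b * (δ i) ^ 2 * R : ℝ) ∂μ :=
            integral_mono_ae (hJg_int.sub hMg_int) (integrable_const _) hbound
        _ = b * (δ i) ^ 2 * R := by simp
    -- second-moment bound
    have hMiL2 : MemLp Mi 2 μ := by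
      refine MemLp.of_bound hMim (K₂ * R + b * (δ i) ^ 2) ?_
      filter_upwards [hMibd] with ω hω using by rwa [Real.norm_eq_abs]
    have hq_int : Integrable (fun ω => (h i ω - Mi ω) ^ 2) μ :=
      ((hhL2 i).sub hMiL2).integrable_sq
    have hvar' : ∫ ω, (h i ω - Mi ω) ^ 2 ∂μ ≤ c := by
      rw [← integral_condExp (hℱ_le i) (f := fun ω => (h i ω - Mi ω) ^ 2)]
      calc ∫ ω, (μ[fun ω' => (h i ω' - Mi ω') ^ 2 | ℱ i]) ω ∂μ
          ≤ ∫ _ω, (c : ℝ) ∂μ :=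
            integral_mono_ae integrable_condExp (integrable_const c) (hvar i hi)
        _ = c := by simp
    have hMi2int : Integrable (fun ω => Mi ω ^ 2) μ := hMiL2.integrable_sq
    have hMh_int : Integrable (fun ω => Mi ω * h i ω) μ :=
      md_integrable_mul_of_ae_bound hhint hMim hMibd
    have pull2 : μ[Mi * h i | ℱ i] =ᵐ[μ] Mi * Mi :=
      condExp_mul_of_stronglyMeasurable_left stronglyMeasurable_condExp hMh_int hhint
    have hInt2 : ∫ ω, Mi ω * h i ω ∂μ = ∫ ω, Mi ω ^ 2 ∂μ := by
      calc ∫ ω, Mi ω * h i ω ∂μ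
          = ∫ ω, (μ[Mi * h i | ℱ i]) ω ∂μ := (integral_condExp (hℱ_le i)).symm
        _ = ∫ ω, (Mi * Mi) ω ∂μ := integral_congr_ae pull2
        _ = ∫ ω, Mi ω ^ 2 ∂μ := by
            apply integral_congr_ae
            filter_upwards with ω
            simp [Pi.mul_apply, sq]
    have hMi2bd : ∫ ω, Mi ω ^ 2 ∂μ ≤ 2 * K₂ ^ 2 * R ^ 2 + 2 * b ^ 2 * (δ i) ^ 4 := by
      have hKR : 0 ≤ K₂ * R := by positivity
      have hbδ : 0 ≤ b * (δ i) ^ 2 := by positivity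
      calc ∫ ω, Mi ω ^ 2 ∂μ
          ≤ ∫ _ω, (2 * K₂ ^ 2 * R ^ 2 + 2 * b ^ 2 * (δ i) ^ 4 : ℝ) ∂μ := by
            refine integral_mono_ae hMi2int (integrable_const _) ?_
            filter_upwards [hMibd] with ω hω
            nlinarith [sq_abs (Mi ω), abs_nonneg (Mi ω),
              sq_nonneg (K₂ * R - b * (δ i) ^ 2)]
        _ = _ := by simp
    have hh2bd : ∫ ω, (h i ω) ^ 2 ∂μ ≤ c + 2 * K₂ ^ 2 * R ^ 2 + 2 * b ^ 2 * (δ i) ^ 4 := by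
      have hsum2 : Integrable (fun ω => 2 * (Mi ω * h i ω) - Mi ω ^ 2) μ := by
        exact (hMh_int.const_mul 2).sub hMi2int
      have hexp : ∫ ω, (h i ω) ^ 2 ∂μ
          = ∫ ω, (h i ω - Mi ω) ^ 2 ∂μ
            + (2 * ∫ ω, Mi ω * h i ω ∂μ - ∫ ω, Mi ω ^ 2 ∂μ) := by
        calc ∫ ω, (h i ω) ^ 2 ∂μ
            = ∫ ω, ((h i ω - Mi ω) ^ 2 + (2 * (Mi ω * h i ω) - Mi ω ^ 2)) ∂μ := by
              apply integral_congr_ae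
              filter_upwards with ω
              ring
          _ = ∫ ω, (h i ω - Mi ω) ^ 2 ∂μ
              + ∫ ω, (2 * (Mi ω * h i ω) - Mi ω ^ 2) ∂μ := integral_add hq_int hsum2
          _ = _ := by
              rw [integral_sub (by exact hMh_int.const_mul 2) hMi2int, integral_const_mul]
      rw [hexp, hInt2]
      linarith [hvar', hMi2bd]
    -- pointwise step inequality
    have hstep_ae : ∀ᵐ ω ∂μ, J (θ i ω) - J θstar
        ≤ (Dst i ω - Dst (i + 1) ω) / a i + a i * (h i ω) ^ 2 / (4 * κ)
          + (J' (θ i ω) - h i ω) * (θ i ω - θstar) := by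
      filter_upwards [hθΘ i, hθΘ (i + 1), hupdate i hi] with ω h1 h2 h3
      exact md_step hΘcv hψ hJconv hJ hθstar hκ hD_lower h1 h2 (hapos i hi) h3
    have hai := hapos i hi
    have hsq_int : Integrable (fun ω => (h i ω) ^ 2) μ := (hhL2 i).integrable_sq
    have hterm2_int : Integrable (fun ω => a i * (h i ω) ^ 2 / (4 * κ)) μ := by
      have := (hsq_int.const_mul (a i)).div_const (4 * κ)
      simpa using this
    have hterm3_int : Integrable (fun ω => (J' (θ i ω) - h i ω) * (θ i ω - θstar)) μ := by
      have heq : (fun ω => (J' (θ i ω) - h i ω) * (θ i ω - θstar))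
          = fun ω => (θ i ω - θstar) * J' (θ i ω) - (θ i ω - θstar) * h i ω := by
        funext ω; ring
      rw [heq]; exact hJg_int.sub hgh_int
    have hterm1_int : Integrable (fun ω => (Dst i ω - Dst (i + 1) ω) / a i) μ :=
      ((hDstint i).sub (hDstint (i + 1))).div_const _
    have hRHS_int : Integrable (fun ω => (Dst i ω - Dst (i + 1) ω) / a i
        + a i * (h i ω) ^ 2 / (4 * κ)
        + (J' (θ i ω) - h i ω) * (θ i ω - θstar)) μ :=
      (hterm1_int.add hterm2_int).add hterm3_int
    have h12int : Integrable (fun ω => (Dst i ω - Dst (i + 1) ω) / a i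
        + a i * (h i ω) ^ 2 / (4 * κ)) μ := by exact hterm1_int.add hterm2_int
    have hmain := integral_mono_ae (hJint i) hRHS_int hstep_ae
    rw [integral_add h12int hterm3_int, integral_add hterm1_int hterm2_int] at hmain
    have hI1 : ∫ ω, (Dst i ω - Dst (i + 1) ω) / a i ∂μ = (e i - e (i + 1)) / a i := by
      rw [integral_div, integral_sub (hDstint i) (hDstint (i + 1))]
    have hI2 : ∫ ω, a i * (h i ω) ^ 2 / (4 * κ) ∂μ
        = a i * (∫ ω, (h i ω) ^ 2 ∂μ) / (4 * κ) := by
      rw [integral_div, integral_const_mul]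
    rw [hI1, hI2] at hmain
    have hI2bd : a i * (∫ ω, (h i ω) ^ 2 ∂μ) / (4 * κ)
        ≤ a i * (c + 2 * K₂ ^ 2 * R ^ 2 + 2 * b ^ 2 * (δ i) ^ 4) / (4 * κ) := by
      apply div_le_div_of_nonneg_right ?_ (by positivity)
      exact mul_le_mul_of_nonneg_left hh2bd hai.le
    linarith [hmain, hI2bd, hthird]

  -- sum up
  have hnR : (0:ℝ) < n := by exact_mod_cast hn
  have hne : (n:ℝ) ≠ 0 := ne_of_gt hnR
  have hsqn : 0 < Real.sqrt n := Real.sqrt_pos.2 hnR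
  have hicc : ∀ i ∈ Finset.Icc 1 n, 1 ≤ i := fun i hi => (Finset.mem_Icc.1 hi).1
  have hsum_le : ∑ i ∈ Finset.Icc 1 n, ∫ ω, (J (θ i ω) - J θstar) ∂μ ≤
      ∑ i ∈ Finset.Icc 1 n, ((e i - e (i + 1)) / a i
        + (a i * (c + 2 * K₂ ^ 2 * R ^ 2 + 2 * b ^ 2 * (δ i) ^ 4) / (4 * κ)
          + b * (δ i) ^ 2 * R)) := by
    refine Finset.sum_le_sum fun i hi => ?_
    have := E1 i (hicc i hi); linarith
  have habel : ∑ i ∈ Finset.Icc 1 n, (e i - e (i + 1)) / a i ≤ (r ^ 2 / 2) / a n := by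
    have h1 := md_abel hapos hamono (fun i _ => he0 i) (fun i _ => heB i) n hn
    have h2 : 0 ≤ e (n + 1) / a n := div_nonneg (he0 _) (hapos n hn).le
    linarith
  set c1 : ℝ := (c + 2 * K₂ ^ 2 * R ^ 2) * a₀ / (4 * κ) with hc1
  set c2 : ℝ := 2 * b ^ 2 * a₀ * d₀ ^ 4 / (4 * κ) + b * R * d₀ ^ 2 with hc2
  have hc1n : 0 ≤ c1 := by rw [hc1]; positivity
  have hc2n : 0 ≤ c2 := by rw [hc2]; positivity
  have hterm : ∀ i ∈ Finset.Icc 1 n,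
      a i * (c + 2 * K₂ ^ 2 * R ^ 2 + 2 * b ^ 2 * (δ i) ^ 4) / (4 * κ) + b * (δ i) ^ 2 * R
        ≤ c1 * (i : ℝ) ^ (-(1:ℝ)/2) + c2 * ((i : ℝ) ^ 2)⁻¹ := by
    intro i hi
    have hi1 : (1:ℝ) ≤ (i:ℝ) := by exact_mod_cast hicc i hi
    have hi0 : (0:ℝ) < (i:ℝ) := by linarith
    set u : ℝ := (i:ℝ) ^ (-(1:ℝ)/2) with hu
    set v : ℝ := ((i:ℝ))⁻¹ with hv
    have hu0 : 0 ≤ u := by rw [hu]; positivity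
    have hu1 : u ≤ 1 := by
      rw [hu]; exact Real.rpow_le_one_of_one_le_of_nonpos hi1 (by norm_num)
    have hv0 : 0 ≤ v := by rw [hv]; positivity
    have hv1 : v ≤ 1 := by rw [hv]; exact inv_le_one_of_one_le₀ hi1
    have hiv : ((i:ℝ) ^ 2)⁻¹ = v ^ 2 := by rw [hv, inv_pow]
    have expand : a i * (c + 2 * K₂ ^ 2 * R ^ 2 + 2 * b ^ 2 * (δ i) ^ 4) / (4 * κ)
          + b * (δ i) ^ 2 * R
        = (c + 2 * K₂ ^ 2 * R ^ 2) * a₀ / (4 * κ) * u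
          + (2 * b ^ 2 * a₀ * d₀ ^ 4 / (4 * κ)) * (u * v ^ 4) + (b * R * d₀ ^ 2) * v ^ 2 := by
      rw [ha i, hδ i, ← hu, ← hv]; ring
    have hv2 : v ^ 2 ≤ 1 := by nlinarith
    have hv4 : v ^ 4 ≤ v ^ 2 := by nlinarith [sq_nonneg v]
    have huv : u * v ^ 4 ≤ v ^ 2 := by nlinarith [pow_nonneg hv0 4]
    have t1 : (2 * b ^ 2 * a₀ * d₀ ^ 4 / (4 * κ)) * (u * v ^ 4)
        ≤ (2 * b ^ 2 * a₀ * d₀ ^ 4 / (4 * κ)) * v ^ 2 :=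
      mul_le_mul_of_nonneg_left huv (by positivity)
    rw [expand, hiv, hc1, hc2]
    have hexp2 : (2 * b ^ 2 * a₀ * d₀ ^ 4 / (4 * κ) + b * R * d₀ ^ 2) * v ^ 2
        = (2 * b ^ 2 * a₀ * d₀ ^ 4 / (4 * κ)) * v ^ 2 + (b * R * d₀ ^ 2) * v ^ 2 := by ring
    rw [hexp2]
    linarith
  have hsum2 : ∑ i ∈ Finset.Icc 1 n,
      (a i * (c + 2 * K₂ ^ 2 * R ^ 2 + 2 * b ^ 2 * (δ i) ^ 4) / (4 * κ) + b * (δ i) ^ 2 * R)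
      ≤ c1 * (2 * Real.sqrt n) + c2 * 2 := by
    calc ∑ i ∈ Finset.Icc 1 n,
        (a i * (c + 2 * K₂ ^ 2 * R ^ 2 + 2 * b ^ 2 * (δ i) ^ 4) / (4 * κ) + b * (δ i) ^ 2 * R)
        ≤ ∑ i ∈ Finset.Icc 1 n, (c1 * (i : ℝ) ^ (-(1:ℝ)/2) + c2 * ((i : ℝ) ^ 2)⁻¹) :=
          Finset.sum_le_sum hterm
      _ = c1 * (∑ i ∈ Finset.Icc 1 n, (i : ℝ) ^ (-(1:ℝ)/2))
          + c2 * (∑ i ∈ Finset.Icc 1 n, ((i : ℝ) ^ 2)⁻¹) := by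
          rw [Finset.sum_add_distrib, Finset.mul_sum, Finset.mul_sum]
      _ ≤ c1 * (2 * Real.sqrt n) + c2 * 2 := by
          have h1 := md_sum_inv_sqrt n hn
          have h2 := md_sum_inv_sq n hn
          have h3 : ∑ i ∈ Finset.Icc 1 n, ((i : ℝ) ^ 2)⁻¹ ≤ 2 := by
            have : 0 ≤ (n:ℝ)⁻¹ := by positivity
            linarith
          exact add_le_add (mul_le_mul_of_nonneg_left h1 hc1n)
            (mul_le_mul_of_nonneg_left h3 hc2n)
  have han_eq : (r ^ 2 / 2) / a n = (r ^ 2 / 2) * Real.sqrt n / a₀ := by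
    have hs0 : Real.sqrt (n:ℝ) ≠ 0 := ne_of_gt hsqn
    rw [ha n, md_rpow_half hnR.le]
    rw [div_eq_div_iff (by positivity) (ne_of_gt ha₀)]
    field_simp
  set S : ℝ := ∑ i ∈ Finset.Icc 1 n, ∫ ω, (J (θ i ω) - J θstar) ∂μ with hS_def
  set A : ℝ := r ^ 2 / 2 / a₀ + (c + 2 * K₂ ^ 2 * R ^ 2) * a₀ / (2 * κ) with hA_def
  set B : ℝ := b ^ 2 / κ * a₀ * d₀ ^ 4 + 2 * (b * R) * d₀ ^ 2 with hB_def
  have hSle : S ≤ A * Real.sqrt n + B := by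
    have hsplit : ∑ i ∈ Finset.Icc 1 n, ((e i - e (i + 1)) / a i
        + (a i * (c + 2 * K₂ ^ 2 * R ^ 2 + 2 * b ^ 2 * (δ i) ^ 4) / (4 * κ)
          + b * (δ i) ^ 2 * R))
        = (∑ i ∈ Finset.Icc 1 n, (e i - e (i + 1)) / a i)
          + ∑ i ∈ Finset.Icc 1 n,
            (a i * (c + 2 * K₂ ^ 2 * R ^ 2 + 2 * b ^ 2 * (δ i) ^ 4) / (4 * κ)
              + b * (δ i) ^ 2 * R) := Finset.sum_add_distrib
    have hAB : (r ^ 2 / 2) * Real.sqrt n / a₀ + (c1 * (2 * Real.sqrt n) + c2 * 2)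
        = A * Real.sqrt n + B := by
      rw [hA_def, hB_def, hc1, hc2]; field_simp; ring
    rw [hS_def]
    calc ∑ i ∈ Finset.Icc 1 n, ∫ ω, (J (θ i ω) - J θstar) ∂μ
        ≤ _ := hsum_le
      _ ≤ (r ^ 2 / 2) / a n + (c1 * (2 * Real.sqrt n) + c2 * 2) := by
          rw [hsplit]; exact add_le_add habel hsum2
      _ = A * Real.sqrt n + B := by rw [han_eq]; exact hAB
  -- Jensen / averaging
  have hcard : (Finset.Icc 1 n).card = n := by rw [Nat.card_Icc]; omega
  have hwsum : ∑ _i ∈ Finset.Icc 1 n, (n:ℝ)⁻¹ = 1 := by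
    rw [Finset.sum_const, hcard, nsmul_eq_mul]
    exact mul_inv_cancel₀ hne
  have havg_le : ∀ ω, J ((∑ i ∈ Finset.Icc 1 n, θ i ω) / n) - J θstar
      ≤ (∑ i ∈ Finset.Icc 1 n, (J (θ i ω) - J θstar)) / n := by
    intro ω
    have hj := hJconv.map_sum_le (t := Finset.Icc 1 n) (w := fun _ => (n:ℝ)⁻¹)
      (p := fun i => θ i ω) (fun i _ => by positivity) hwsum (fun i _ => Set.mem_univ _)
    have heq1 : (∑ i ∈ Finset.Icc 1 n, θ i ω) / (n:ℝ)
        = ∑ i ∈ Finset.Icc 1 n, (n:ℝ)⁻¹ • θ i ω := by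
      rw [Finset.sum_div]
      exact Finset.sum_congr rfl fun i _ => by rw [smul_eq_mul, div_eq_inv_mul]
    have hj2 : (n:ℝ) * J ((∑ i ∈ Finset.Icc 1 n, θ i ω) / n)
        ≤ ∑ i ∈ Finset.Icc 1 n, J (θ i ω) := by
      rw [heq1]
      calc (n:ℝ) * J (∑ i ∈ Finset.Icc 1 n, (n:ℝ)⁻¹ • θ i ω)
          ≤ (n:ℝ) * ∑ i ∈ Finset.Icc 1 n, (n:ℝ)⁻¹ * J (θ i ω) :=
            mul_le_mul_of_nonneg_left hj hnR.le
        _ = ∑ i ∈ Finset.Icc 1 n, J (θ i ω) := by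
            rw [Finset.mul_sum]
            exact Finset.sum_congr rfl fun i _ => by field_simp
    rw [le_div_iff₀ hnR, Finset.sum_sub_distrib, Finset.sum_const, hcard, nsmul_eq_mul]
    nlinarith [hj2]
  have havgm : AEStronglyMeasurable
      (fun ω => J ((∑ i ∈ Finset.Icc 1 n, θ i ω) / n) - J θstar) μ := by
    apply Measurable.aestronglyMeasurable
    refine Measurable.sub ?_ measurable_const
    exact hJc.measurable.comp ((Finset.measurable_sum _ (fun i _ => hθm i)).div_const _)
  have havgΘ : ∀ᵐ ω ∂μ, (∑ i ∈ Finset.Icc 1 n, θ i ω) / (n:ℝ) ∈ Θ := by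
    have hall : ∀ᵐ ω ∂μ, ∀ i ∈ Finset.Icc 1 n, θ i ω ∈ Θ :=
      (ae_ball_iff (Finset.Icc 1 n).countable_toSet).2 fun i _ => hθΘ i
    filter_upwards [hall] with ω hω
    have hmem := hΘcv.sum_mem
      (t := Finset.Icc 1 n) (w := fun _ => (n:ℝ)⁻¹) (z := fun i => θ i ω)
      (fun i _ => by positivity) hwsum (fun i hi => hω i hi)
    have heq1 : (∑ i ∈ Finset.Icc 1 n, θ i ω) / (n:ℝ)
        = ∑ i ∈ Finset.Icc 1 n, (n:ℝ)⁻¹ • θ i ω := by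
      rw [Finset.sum_div]
      exact Finset.sum_congr rfl fun i _ => by rw [smul_eq_mul, div_eq_inv_mul]
    rw [heq1]; exact hmem
  have hLHSint : Integrable
      (fun ω => J ((∑ i ∈ Finset.Icc 1 n, θ i ω) / n) - J θstar) μ := by
    obtain ⟨C, hC⟩ := hΘcp.exists_bound_of_continuousOn hJc.continuousOn
    refine (integrable_const (C + |J θstar|)).mono' havgm ?_
    filter_upwards [havgΘ] with ω hω
    rw [Real.norm_eq_abs]
    calc |J ((∑ i ∈ Finset.Icc 1 n, θ i ω) / n) - J θstar|
        ≤ |J ((∑ i ∈ Finset.Icc 1 n, θ i ω) / n)| + |J θstar| := abs_sub _ _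
      _ ≤ C + |J θstar| := add_le_add (by simpa using hC _ hω) le_rfl
  have hRHSint : Integrable
      (fun ω => (∑ i ∈ Finset.Icc 1 n, (J (θ i ω) - J θstar)) / n) μ :=
    (integrable_finset_sum _ (fun i _ => hJint i)).div_const _
  have hfinal1 : ∫ ω, (J ((∑ i ∈ Finset.Icc 1 n, θ i ω) / n) - J θstar) ∂μ ≤ S / n := by
    calc ∫ ω, (J ((∑ i ∈ Finset.Icc 1 n, θ i ω) / n) - J θstar) ∂μ
        ≤ ∫ ω, (∑ i ∈ Finset.Icc 1 n, (J (θ i ω) - J θstar)) / n ∂μ :=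
          integral_mono_ae hLHSint hRHSint (Filter.Eventually.of_forall havg_le)
      _ = S / n := by
          rw [integral_div, integral_finset_sum _ (fun i _ => hJint i)]
  -- final arithmetic
  set m : ℝ := max a₀ a₀⁻¹ with hm_def
  have hm0 : 0 < m := lt_of_lt_of_le ha₀ (le_max_left _ _)
  have hq1 : (0:ℝ) ≤ c / (2 * κ) := by positivity
  have hq2 : (0:ℝ) ≤ K₂ ^ 2 * r ^ 2 / (2 * κ ^ 2) := by positivity
  have hAle : A ≤ (r ^ 2 / 2 + 2 * (c / (2 * κ)) + 2 * (K₂ ^ 2 * r ^ 2 / (2 * κ ^ 2))) * m := by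
    have h1 : r ^ 2 / 2 / a₀ ≤ (r ^ 2 / 2) * m := by
      rw [div_eq_mul_inv]
      exact mul_le_mul_of_nonneg_left (le_max_right _ _) (by positivity)
    have h2 : (c + 2 * K₂ ^ 2 * R ^ 2) * a₀ / (2 * κ)
        = (c / (2 * κ)) * a₀ + (K₂ ^ 2 * r ^ 2 / (2 * κ ^ 2)) * a₀ := by
      rw [hR2]; field_simp
    have h3 : (c / (2 * κ)) * a₀ ≤ (c / (2 * κ)) * m :=
      mul_le_mul_of_nonneg_left (le_max_left _ _) hq1
    have h4 : (K₂ ^ 2 * r ^ 2 / (2 * κ ^ 2)) * a₀ ≤ (K₂ ^ 2 * r ^ 2 / (2 * κ ^ 2)) * m :=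
      mul_le_mul_of_nonneg_left (le_max_left _ _) hq2
    have h5 : 0 ≤ (c / (2 * κ)) * m := by positivity
    have h6 : 0 ≤ (K₂ ^ 2 * r ^ 2 / (2 * κ ^ 2)) * m := by positivity
    have hexp : (r ^ 2 / 2 + 2 * (c / (2 * κ)) + 2 * (K₂ ^ 2 * r ^ 2 / (2 * κ ^ 2))) * m
        = (r ^ 2 / 2) * m + 2 * ((c / (2 * κ)) * m)
          + 2 * ((K₂ ^ 2 * r ^ 2 / (2 * κ ^ 2)) * m) := by ring
    rw [hA_def, h2, hexp]
    linarith
  have hBle : B ≤ (9 / 7) * (b ^ 2 / κ) * d₀ ^ 4 * a₀ + 2 * (b * r / Real.sqrt (2 * κ)) * d₀ ^ 2 := by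
    have h1 : 0 ≤ b ^ 2 / κ * a₀ * d₀ ^ 4 := by positivity
    have h2 : 2 * (b * R) * d₀ ^ 2 = 2 * (b * r / Real.sqrt (2 * κ)) * d₀ ^ 2 := by
      rw [hR_def]; ring
    rw [hB_def, h2]
    have h4 : b ^ 2 / κ * a₀ * d₀ ^ 4 + (2/7) * (b ^ 2 / κ * a₀ * d₀ ^ 4)
        = (9 / 7) * (b ^ 2 / κ) * d₀ ^ 4 * a₀ := by ring
    have h5 : 0 ≤ (2/7) * (b ^ 2 / κ * a₀ * d₀ ^ 4) := by positivity
    linarith only [h4, h5]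
  have hnn : Real.sqrt n * Real.sqrt n = (n:ℝ) := Real.mul_self_sqrt hnR.le
  have hAsn : A * Real.sqrt n / (n:ℝ) = A / Real.sqrt n := by
    rw [div_eq_div_iff hne (ne_of_gt hsqn), mul_assoc, hnn]
  have hSn2 : S / (n:ℝ) ≤ A / Real.sqrt n + B / n := by
    have h1 : S / (n:ℝ) ≤ (A * Real.sqrt n + B) / n := by gcongr
    rw [add_div, hAsn] at h1
    exact h1
  have hfinal2 : A / Real.sqrt n + B / n
      ≤ (r ^ 2 / 2 + 2 * (c / (2 * κ)) + 2 * (K₂ ^ 2 * r ^ 2 / (2 * κ ^ 2)))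
          * m / Real.sqrt n
        + ((9 / 7) * (b ^ 2 / κ) * d₀ ^ 4 * a₀ + 2 * (b * r / Real.sqrt (2 * κ)) * d₀ ^ 2) / n := by
    gcongr
  have hsplit2 : ((9 / 7) * (b ^ 2 / κ) * d₀ ^ 4 * a₀
      + 2 * (b * r / Real.sqrt (2 * κ)) * d₀ ^ 2) / (n:ℝ)
      = (9 / 7) * (b ^ 2 / κ) * d₀ ^ 4 * a₀ / n
        + 2 * (b * r / Real.sqrt (2 * κ)) * d₀ ^ 2 / n := add_div _ _ _
  calc ∫ ω, (J ((∑ i ∈ Finset.Icc 1 n, θ i ω) / n) - J θstar) ∂μ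
      ≤ S / n := hfinal1
    _ ≤ A / Real.sqrt n + B / n := hSn2
    _ ≤ _ := by
        rw [add_assoc, ← hsplit2]
        exact hfinal2
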